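/- Let p be a prime, n ≥ 1, and G = Z_{p^n} ⊕ Z_{p^n}. The cyclic subgroups of G are exactly the trivial subgroup together with the subgroups ⟨(p^m, a p^m)⟩ for 0 ≤ m ≤ n-1 and 0 ≤ a ≤ p^{n-m} - 1, and the subgroups ⟨(b p^{m+1}, p^m)⟩ for 0 ≤ m ≤ n-1 and 0 ≤ b ≤ p^{n-m-1} - 1; moreover all these subgroups are pairwise distinct. -/

import Mathlib

section
variable (p n : ℕ)

/-- The subgroup `⟨(pᵐ, a·pᵐ)⟩` of `ℤ_{pⁿ} ⊕ ℤ_{pⁿ}`. -/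
def fam₁ (m a : ℕ) : AddSubgroup (ZMod (p ^ n) × ZMod (p ^ n)) :=
  AddSubgroup.zmultiples (((p ^ m : ℕ) : ZMod (p ^ n)), ((a * p ^ m : ℕ) : ZMod (p ^ n)))

/-- The subgroup `⟨(b·p^{m+1}, pᵐ)⟩` of `ℤ_{pⁿ} ⊕ ℤ_{pⁿ}`. -/
def fam₂ (m b : ℕ) : AddSubgroup (ZMod (p ^ n) × ZMod (p ^ n)) :=
  AddSubgroup.zmultiples (((b * p ^ (m + 1) : ℕ) : ZMod (p ^ n)), ((p ^ m : ℕ) : ZMod (p ^ n)))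

end

open AddSubgroup

lemma zm_eq {A : Type*} [AddCommGroup A] {x y : A}
    (h1 : x ∈ zmultiples y) (h2 : y ∈ zmultiples x) :
    zmultiples x = zmultiples y :=
  le_antisymm (zmultiples_le_of_mem h1) (zmultiples_le_of_mem h2)

lemma mem_of_modeq {N x y z w k : ℕ} (h1 : k * z ≡ x [MOD N]) (h2 : k * w ≡ y [MOD N]) :
    ((x : ZMod N), (y : ZMod N)) ∈ zmultiples ((z : ZMod N), (w : ZMod N)) := by
  refine ⟨(k : ℤ), ?_⟩
  have e1 : ((k * z : ℕ) : ZMod N) = ((x : ℕ) : ZMod N) := (ZMod.natCast_eq_natCast_iff _ _ _).2 h1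
  have e2 : ((k * w : ℕ) : ZMod N) = ((y : ℕ) : ZMod N) := (ZMod.natCast_eq_natCast_iff _ _ _).2 h2
  push_cast at e1 e2
  simp only [Prod.smul_mk, Prod.mk.injEq, zsmul_eq_mul]
  push_cast
  exact ⟨e1, e2⟩

lemma modeq_of_mem {N x y z w : ℕ}
    (h : ((x : ZMod N), (y : ZMod N)) ∈ zmultiples ((z : ZMod N), (w : ZMod N))) :
    ∃ k : ℤ, (N : ℤ) ∣ k * z - x ∧ (N : ℤ) ∣ k * w - y := by
  obtain ⟨k, hk⟩ := mem_zmultiples_iff.1 h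
  refine ⟨k, ?_, ?_⟩
  · have e1 : (k • ((z : ZMod N), (w : ZMod N))).1 = ((x : ZMod N)) := by rw [hk]
    simp only [Prod.smul_fst, zsmul_eq_mul] at e1
    have : ((k * z : ℤ) : ZMod N) = ((x : ℤ) : ZMod N) := by push_cast; exact e1
    have := ((ZMod.intCast_eq_intCast_iff _ _ _).1 this)
    exact Int.ModEq.dvd this.symm
  · have e1 : (k • ((z : ZMod N), (w : ZMod N))).2 = ((y : ZMod N)) := by rw [hk]
    simp only [Prod.smul_snd, zsmul_eq_mul] at e1
    have : ((k * w : ℤ) : ZMod N) = ((y : ℤ) : ZMod N) := by push_cast; exact e1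
    have := ((ZMod.intCast_eq_intCast_iff _ _ _).1 this)
    exact Int.ModEq.dvd this.symm

lemma pow_sub_dvd' {p n m : ℕ} (hp : p.Prime) (hmn : m ≤ n) {t : ℤ}
    (h : (p : ℤ) ^ n ∣ (p : ℤ) ^ m * t) : (p : ℤ) ^ (n - m) ∣ t := by
  have e : (p : ℤ) ^ n = (p : ℤ) ^ m * (p : ℤ) ^ (n - m) := by
    rw [← pow_add]; congr 1; omega
  rw [e] at h
  exact (mul_dvd_mul_iff_left (pow_ne_zero m (by exact_mod_cast hp.ne_zero))).1 h

lemma val_le {p n m m' : ℕ} (hp : p.Prime) (hm : m + 1 ≤ n) {k : ℤ}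
    (h : (p : ℤ) ^ n ∣ k * (p : ℤ) ^ m' - (p : ℤ) ^ m) : m' ≤ m := by
  by_contra hlt
  push_neg at hlt
  have d1 : (p : ℤ) ^ (m + 1) ∣ k * (p : ℤ) ^ m' :=
    Dvd.dvd.mul_left (pow_dvd_pow _ (by omega)) k
  have d2 : (p : ℤ) ^ (m + 1) ∣ k * (p : ℤ) ^ m' - (p : ℤ) ^ m :=
    (pow_dvd_pow _ hm).trans h
  have d3 : (p : ℤ) ^ (m + 1) ∣ (p : ℤ) ^ m := by
    have := dvd_sub d1 d2
    simpa using this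
  have d4 : p ^ (m + 1) ∣ p ^ m := by exact_mod_cast d3
  have := (Nat.pow_dvd_pow_iff_le_right hp.one_lt).1 d4
  omega

lemma eq_of_dvd_lt {q : ℕ} {a a' : ℕ} (ha : a < q) (ha' : a' < q)
    (h : (q : ℤ) ∣ (a : ℤ) - a') : a = a' := by
  rcases h with ⟨t, ht⟩
  rcases lt_trichotomy t 0 with h0 | h0 | h0
  · nlinarith [Int.ofNat_lt.2 ha, Int.ofNat_lt.2 ha', Int.natCast_nonneg a,
      Int.natCast_nonneg a', (show t ≤ -1 by omega), (show (0:ℤ) ≤ q by positivity)]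
  · subst h0; omega
  · nlinarith [Int.ofNat_lt.2 ha, Int.ofNat_lt.2 ha', Int.natCast_nonneg a,
      Int.natCast_nonneg a', (show 1 ≤ t by omega), (show (0:ℤ) ≤ q by positivity)]

lemma inv_exists {p n w : ℕ} (hp : p.Prime) (hn : 1 ≤ n) (hw : ¬ p ∣ w) :
    ∃ w', w * w' ≡ 1 [MOD p ^ n] := by
  have hcop : Nat.Coprime w (p ^ n) :=
    (Nat.Coprime.pow_right _ ((hp.coprime_iff_not_dvd).2 hw).symm)
  have h1 : 1 < p ^ n := Nat.one_lt_pow (by omega) hp.one_lt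
  obtain ⟨w', -, hw'⟩ := Nat.exists_mul_mod_eq_one_of_coprime hcop h1
  exact ⟨w', by unfold Nat.ModEq; rw [hw', Nat.mod_eq_of_lt h1]⟩

lemma genA {p n : ℕ} (hp : p.Prime) (hn : 1 ≤ n) {m w c : ℕ} (hm : m ≤ n - 1) (hw : ¬ p ∣ w) :
    ∃ a, a ≤ p ^ (n - m) - 1 ∧
      zmultiples (((p ^ m * w : ℕ) : ZMod (p ^ n)), ((p ^ m * c : ℕ) : ZMod (p ^ n)))
        = fam₁ p n m a := by
  obtain ⟨w', hww'⟩ := inv_exists hp hn hw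
  have hq : 0 < p ^ (n - m) := pow_pos hp.pos _
  have hqn : p ^ (n - m) * p ^ m = p ^ n := by rw [← pow_add]; congr 1; omega
  refine ⟨(w' * c) % p ^ (n - m), by have := Nat.mod_lt (w' * c) hq; omega, ?_⟩
  have hamod : (w' * c) % p ^ (n - m) ≡ w' * c [MOD p ^ (n - m)] := Nat.mod_modEq _ _
  set a := (w' * c) % p ^ (n - m) with ha
  unfold fam₁
  refine zm_eq ?_ ?_
  · -- (p^m*w, p^m*c) ∈ zmultiples (p^m, a*p^m), k := w
    refine mem_of_modeq (k := w) ?_ ?_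
    · have : w * p ^ m = p ^ m * w := by ring
      rw [this]
    · have h1 : w * a ≡ c [MOD p ^ (n - m)] := by
        calc w * a ≡ w * (w' * c) [MOD p ^ (n - m)] := hamod.mul_left w
          _ = (w * w') * c := by ring
          _ ≡ 1 * c [MOD p ^ (n - m)] :=
            ((hww'.mul_right c).of_dvd (pow_dvd_pow p (by omega)))
          _ = c := one_mul c
      have h2 := h1.mul_right' (c := p ^ m)
      rw [hqn] at h2
      calc w * (a * p ^ m) = (w * a) * p ^ m := by ring
        _ ≡ c * p ^ m [MOD p ^ n] := h2
        _ = p ^ m * c := by ring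
  · -- (p^m, a*p^m) ∈ zmultiples (p^m*w, p^m*c), k := w'
    refine mem_of_modeq (k := w') ?_ ?_
    · calc w' * (p ^ m * w) = (w * w') * p ^ m := by ring
        _ ≡ 1 * p ^ m [MOD p ^ n] := hww'.mul_right _
        _ = p ^ m := one_mul _
    · have h2 := (hamod.symm.mul_right' (c := p ^ m))
      rw [hqn] at h2
      calc w' * (p ^ m * c) = (w' * c) * p ^ m := by ring
        _ ≡ a * p ^ m [MOD p ^ n] := h2

lemma genB {p n : ℕ} (hp : p.Prime) (hn : 1 ≤ n) {m w c : ℕ} (hm : m ≤ n - 1) (hw : ¬ p ∣ w) :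
    ∃ b, b ≤ p ^ (n - m - 1) - 1 ∧
      zmultiples (((p ^ (m + 1) * c : ℕ) : ZMod (p ^ n)), ((p ^ m * w : ℕ) : ZMod (p ^ n)))
        = fam₂ p n m b := by
  obtain ⟨w', hww'⟩ := inv_exists hp hn hw
  have hq : 0 < p ^ (n - m - 1) := pow_pos hp.pos _
  have hqn : p ^ (n - m - 1) * p ^ (m + 1) = p ^ n := by rw [← pow_add]; congr 1; omega
  refine ⟨(w' * c) % p ^ (n - m - 1), by have := Nat.mod_lt (w' * c) hq; omega, ?_⟩
  have hamod : (w' * c) % p ^ (n - m - 1) ≡ w' * c [MOD p ^ (n - m - 1)] := Nat.mod_modEq _ _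
  set b := (w' * c) % p ^ (n - m - 1) with hb
  unfold fam₂
  refine zm_eq ?_ ?_
  · refine mem_of_modeq (k := w) ?_ ?_
    · have h1 : w * b ≡ c [MOD p ^ (n - m - 1)] := by
        calc w * b ≡ w * (w' * c) [MOD p ^ (n - m - 1)] := hamod.mul_left w
          _ = (w * w') * c := by ring
          _ ≡ 1 * c [MOD p ^ (n - m - 1)] :=
            ((hww'.mul_right c).of_dvd (pow_dvd_pow p (by omega)))
          _ = c := one_mul c
      have h2 := h1.mul_right' (c := p ^ (m + 1))
      rw [hqn] at h2
      calc w * (b * p ^ (m + 1)) = (w * b) * p ^ (m + 1) := by ring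
        _ ≡ c * p ^ (m + 1) [MOD p ^ n] := h2
        _ = p ^ (m + 1) * c := by ring
    · have : w * p ^ m = p ^ m * w := by ring
      rw [this]
  · refine mem_of_modeq (k := w') ?_ ?_
    · have h2 := (hamod.mul_right' (c := p ^ (m + 1)))
      rw [hqn] at h2
      calc w' * (p ^ (m + 1) * c) = (w' * c) * p ^ (m + 1) := by ring
        _ ≡ b * p ^ (m + 1) [MOD p ^ n] := h2.symm
    · calc w' * (p ^ m * w) = (w * w') * p ^ m := by ring
        _ ≡ 1 * p ^ m [MOD p ^ n] := hww'.mul_right _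
        _ = p ^ m := one_mul _

lemma decomp {p n : ℕ} (hp : p.Prime) (hn : 1 ≤ n) {u : ℕ} (hu : u ≠ 0) (hun : u < p ^ n) :
    ∃ m w, m ≤ n - 1 ∧ ¬ p ∣ w ∧ u = p ^ m * w := by
  haveI : Fact p.Prime := ⟨hp⟩
  obtain ⟨w, hw⟩ := pow_padicValNat_dvd (p := p) (n := u)
  refine ⟨padicValNat p u, w, ?_, ?_, hw⟩
  · have h1 : p ^ padicValNat p u ≤ u := Nat.le_of_dvd (Nat.pos_of_ne_zero hu) ⟨w, hw⟩
    have h2 : p ^ padicValNat p u < p ^ n := lt_of_le_of_lt h1 hun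
    have := (Nat.pow_lt_pow_iff_right hp.one_lt).1 h2
    omega
  · intro hdvd
    apply pow_succ_padicValNat_not_dvd (p := p) hu
    conv_rhs => rw [hw]
    rw [pow_succ]
    exact mul_dvd_mul_left _ hdvd

lemma classify {p n : ℕ} (hp : p.Prime) (hn : 1 ≤ n)
    (x : ZMod (p ^ n) × ZMod (p ^ n)) (hx : x ≠ 0) :
    (∃ m a, m ≤ n - 1 ∧ a ≤ p ^ (n - m) - 1 ∧ zmultiples x = fam₁ p n m a) ∨
    (∃ m b, m ≤ n - 1 ∧ b ≤ p ^ (n - m - 1) - 1 ∧ zmultiples x = fam₂ p n m b) := by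
  haveI : NeZero (p ^ n) := ⟨pow_ne_zero n hp.ne_zero⟩
  set u₀ := x.1.val with hu₀
  set v₀ := x.2.val with hv₀
  have hxe : ((u₀ : ZMod (p ^ n)), (v₀ : ZMod (p ^ n))) = x := by
    simp [hu₀, hv₀, ZMod.natCast_zmod_val]
  have hult : u₀ < p ^ n := ZMod.val_lt x.1
  have hvlt : v₀ < p ^ n := ZMod.val_lt x.2
  have hboth : ¬ (u₀ = 0 ∧ v₀ = 0) := by
    rintro ⟨h1, h2⟩
    apply hx
    rw [← hxe, h1, h2]
    simp [Prod.ext_iff]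
  by_cases hu : u₀ = 0
  · have hv : v₀ ≠ 0 := fun h => hboth ⟨hu, h⟩
    obtain ⟨m, w, hm, hw, hvw⟩ := decomp hp hn hv hvlt
    obtain ⟨b, hb, heq⟩ := genB hp hn (c := 0) hm hw
    right
    refine ⟨m, b, hm, hb, ?_⟩
    rw [← heq]
    congr 1
    rw [← hxe]
    congr 1 <;> simp [hu, hvw]
  · obtain ⟨m, w, hm, hw, huw⟩ := decomp hp hn hu hult
    by_cases hv : p ^ m ∣ v₀
    · obtain ⟨c, hc⟩ := hv
      obtain ⟨a, ha, heq⟩ := genA hp hn (c := c) hm hw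
      left
      refine ⟨m, a, hm, ha, ?_⟩
      rw [← heq]
      congr 1
      rw [← hxe]
      congr 1 <;> simp [huw, hc]
    · have hv0 : v₀ ≠ 0 := fun h => hv (h ▸ dvd_zero _)
      obtain ⟨m', w', hm', hw', hvw⟩ := decomp hp hn hv0 hvlt
      have hlt : m' < m := by
        by_contra hle
        push_neg at hle
        exact hv ((pow_dvd_pow p hle).trans ⟨w', hvw⟩)
      have hdvd : p ^ (m' + 1) ∣ u₀ := (pow_dvd_pow p (by omega)).trans ⟨w, huw⟩
      obtain ⟨c, hc⟩ := hdvd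
      obtain ⟨b, hb, heq⟩ := genB hp hn (c := c) hm' hw'
      right
      refine ⟨m', b, hm', hb, ?_⟩
      rw [← heq]
      congr 1
      rw [← hxe]
      congr 1 <;> simp [hc, hvw]

lemma fam₁_inj {p n : ℕ} (hp : p.Prime) (hn : 1 ≤ n) {m a m' a' : ℕ}
    (hm : m ≤ n - 1) (ha : a ≤ p ^ (n - m) - 1) (hm' : m' ≤ n - 1) (ha' : a' ≤ p ^ (n - m') - 1)
    (h : fam₁ p n m a = fam₁ p n m' a') : m = m' ∧ a = a' := by
  have g1 : (((p ^ m : ℕ) : ZMod (p ^ n)), ((a * p ^ m : ℕ) : ZMod (p ^ n))) ∈ fam₁ p n m' a' := by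
    rw [← h]; unfold fam₁; exact mem_zmultiples _
  have g2 : (((p ^ m' : ℕ) : ZMod (p ^ n)), ((a' * p ^ m' : ℕ) : ZMod (p ^ n))) ∈ fam₁ p n m a := by
    rw [h]; unfold fam₁; exact mem_zmultiples _
  unfold fam₁ at g1 g2
  obtain ⟨k, hk1, hk2⟩ := modeq_of_mem g1
  obtain ⟨l, hl1, hl2⟩ := modeq_of_mem g2
  push_cast at hk1 hk2 hl1 hl2
  have e1 : m' ≤ m := val_le hp (by omega) hk1
  have e2 : m ≤ m' := val_le hp (by omega) hl1
  have hmm : m = m' := le_antisymm e2 e1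
  subst hmm
  refine ⟨rfl, ?_⟩
  have hk1' : (p : ℤ) ^ (n - m) ∣ k - 1 := by
    refine pow_sub_dvd' hp (by omega) ?_
    have e : (p : ℤ) ^ m * (k - 1) = k * (p : ℤ) ^ m - (p : ℤ) ^ m := by ring
    rw [e]; exact hk1
  have hk2' : (p : ℤ) ^ (n - m) ∣ k * a' - a := by
    refine pow_sub_dvd' hp (by omega) ?_
    have e : (p : ℤ) ^ m * (k * a' - a) = k * ((a' : ℤ) * (p : ℤ) ^ m) - a * (p : ℤ) ^ m := by ring
    rw [e]; exact hk2
  have hfin : (p : ℤ) ^ (n - m) ∣ (a' : ℤ) - a := by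
    have := dvd_sub hk2' (hk1'.mul_left (a' : ℤ))
    have e : k * (a' : ℤ) - a - (a' : ℤ) * (k - 1) = (a' : ℤ) - a := by ring
    rwa [e] at this
  have hq : 0 < p ^ (n - m) := pow_pos hp.pos _
  exact (eq_of_dvd_lt (q := p ^ (n - m)) (by omega) (by omega) (by push_cast; exact hfin)).symm

lemma fam₂_inj {p n : ℕ} (hp : p.Prime) (hn : 1 ≤ n) {m b m' b' : ℕ}
    (hm : m ≤ n - 1) (hb : b ≤ p ^ (n - m - 1) - 1) (hm' : m' ≤ n - 1)
    (hb' : b' ≤ p ^ (n - m' - 1) - 1)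
    (h : fam₂ p n m b = fam₂ p n m' b') : m = m' ∧ b = b' := by
  have g1 : (((b * p ^ (m + 1) : ℕ) : ZMod (p ^ n)), ((p ^ m : ℕ) : ZMod (p ^ n)))
      ∈ fam₂ p n m' b' := by
    rw [← h]; unfold fam₂; exact mem_zmultiples _
  have g2 : (((b' * p ^ (m' + 1) : ℕ) : ZMod (p ^ n)), ((p ^ m' : ℕ) : ZMod (p ^ n)))
      ∈ fam₂ p n m b := by
    rw [h]; unfold fam₂; exact mem_zmultiples _
  unfold fam₂ at g1 g2
  obtain ⟨k, hk1, hk2⟩ := modeq_of_mem g1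
  obtain ⟨l, hl1, hl2⟩ := modeq_of_mem g2
  push_cast at hk1 hk2 hl1 hl2
  have e1 : m' ≤ m := val_le hp (by omega) hk2
  have e2 : m ≤ m' := val_le hp (by omega) hl2
  have hmm : m = m' := le_antisymm e2 e1
  subst hmm
  refine ⟨rfl, ?_⟩
  have hk1' : (p : ℤ) ^ (n - m) ∣ k - 1 := by
    refine pow_sub_dvd' hp (by omega) ?_
    have e : (p : ℤ) ^ m * (k - 1) = k * (p : ℤ) ^ m - (p : ℤ) ^ m := by ring
    rw [e]; exact hk2
  have hk1'' : (p : ℤ) ^ (n - m - 1) ∣ k - 1 :=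
    dvd_trans (pow_dvd_pow _ (by omega)) hk1'
  have hk2' : (p : ℤ) ^ (n - m - 1) ∣ k * b' - b := by
    have h' : (p : ℤ) ^ (n - (m + 1)) ∣ k * b' - b := by
      refine pow_sub_dvd' hp (by omega) ?_
      have e : (p : ℤ) ^ (m + 1) * (k * b' - b)
          = k * ((b' : ℤ) * (p : ℤ) ^ (m + 1)) - b * (p : ℤ) ^ (m + 1) := by ring
      rw [e]; exact hk1
    have e : n - (m + 1) = n - m - 1 := by omega
    rwa [e] at h'
  have hfin : (p : ℤ) ^ (n - m - 1) ∣ (b' : ℤ) - b := by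
    have := dvd_sub hk2' (hk1''.mul_left (b' : ℤ))
    have e : k * (b' : ℤ) - b - (b' : ℤ) * (k - 1) = (b' : ℤ) - b := by ring
    rwa [e] at this
  have hq : 0 < p ^ (n - m - 1) := pow_pos hp.pos _
  exact (eq_of_dvd_lt (q := p ^ (n - m - 1)) (by omega) (by omega) (by push_cast; exact hfin)).symm

lemma fam₁_ne_fam₂ {p n : ℕ} (hp : p.Prime) (hn : 1 ≤ n) {m a m' b : ℕ}
    (hm : m ≤ n - 1) (ha : a ≤ p ^ (n - m) - 1) (hm' : m' ≤ n - 1)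
    (hb : b ≤ p ^ (n - m' - 1) - 1) : fam₁ p n m a ≠ fam₂ p n m' b := by
  intro h
  have g1 : (((p ^ m : ℕ) : ZMod (p ^ n)), ((a * p ^ m : ℕ) : ZMod (p ^ n)))
      ∈ fam₂ p n m' b := by
    rw [← h]; unfold fam₁; exact mem_zmultiples _
  have g2 : (((b * p ^ (m' + 1) : ℕ) : ZMod (p ^ n)), ((p ^ m' : ℕ) : ZMod (p ^ n)))
      ∈ fam₁ p n m a := by
    rw [h]; unfold fam₂; exact mem_zmultiples _
  unfold fam₁ at g2
  unfold fam₂ at g1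
  obtain ⟨k, hk1, hk2⟩ := modeq_of_mem g1
  obtain ⟨l, hl1, hl2⟩ := modeq_of_mem g2
  push_cast at hk1 hk2 hl1 hl2
  have e1 : m' + 1 ≤ m := by
    have e : k * (b : ℤ) * (p : ℤ) ^ (m' + 1) - (p : ℤ) ^ m
        = k * ((b : ℤ) * (p : ℤ) ^ (m' + 1)) - (p : ℤ) ^ m := by ring
    exact val_le (n := n) (m := m) (m' := m' + 1) hp (by omega) (k := k * b) (by rw [e]; exact hk1)
  have e2 : m ≤ m' := by
    have e : l * (a : ℤ) * (p : ℤ) ^ m - (p : ℤ) ^ m'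
        = l * ((a : ℤ) * (p : ℤ) ^ m) - (p : ℤ) ^ m' := by ring
    exact val_le (n := n) (m := m') (m' := m) hp (by omega) (k := l * a) (by rw [e]; exact hl2)
  omega

lemma fam₁_ne_bot {p n : ℕ} (hp : p.Prime) (hn : 1 ≤ n) {m a : ℕ}
    (hm : m ≤ n - 1) (ha : a ≤ p ^ (n - m) - 1) : fam₁ p n m a ≠ ⊥ := by
  intro h
  unfold fam₁ at h
  rw [AddSubgroup.zmultiples_eq_bot] at h
  have h1 : ((p ^ m : ℕ) : ZMod (p ^ n)) = 0 := congrArg Prod.fst h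
  rw [ZMod.natCast_eq_zero_iff] at h1
  have := (Nat.pow_dvd_pow_iff_le_right hp.one_lt).1 h1
  omega

lemma fam₂_ne_bot {p n : ℕ} (hp : p.Prime) (hn : 1 ≤ n) {m b : ℕ}
    (hm : m ≤ n - 1) (hb : b ≤ p ^ (n - m - 1) - 1) : fam₂ p n m b ≠ ⊥ := by
  intro h
  unfold fam₂ at h
  rw [AddSubgroup.zmultiples_eq_bot] at h
  have h1 : ((p ^ m : ℕ) : ZMod (p ^ n)) = 0 := congrArg Prod.snd h
  rw [ZMod.natCast_eq_zero_iff] at h1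
  have := (Nat.pow_dvd_pow_iff_le_right hp.one_lt).1 h1
  omega

/-- the cyclic subgroups of `ℤ_{pⁿ} ⊕ ℤ_{pⁿ}` are exactly the trivial
subgroup together with the `⟨(pᵐ, a pᵐ)⟩` (`0 ≤ m ≤ n-1`, `0 ≤ a ≤ p^{n-m}-1`) and the
`⟨(b p^{m+1}, pᵐ)⟩` (`0 ≤ m ≤ n-1`, `0 ≤ b ≤ p^{n-m-1}-1`); moreover all the listed
subgroups are pairwise distinct. -/
theorem stmt_6 (p : ℕ) (hp : p.Prime) (n : ℕ) (hn : 1 ≤ n) :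
    (∀ H : AddSubgroup (ZMod (p ^ n) × ZMod (p ^ n)),
      (∃ x, H = AddSubgroup.zmultiples x) ↔
        (H = ⊥ ∨
         (∃ m a, m ≤ n - 1 ∧ a ≤ p ^ (n - m) - 1 ∧ H = fam₁ p n m a) ∨
         (∃ m b, m ≤ n - 1 ∧ b ≤ p ^ (n - m - 1) - 1 ∧ H = fam₂ p n m b))) ∧
    (∀ m a m' a', m ≤ n - 1 → a ≤ p ^ (n - m) - 1 → m' ≤ n - 1 → a' ≤ p ^ (n - m') - 1 →
      fam₁ p n m a = fam₁ p n m' a' → m = m' ∧ a = a') ∧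
    (∀ m b m' b', m ≤ n - 1 → b ≤ p ^ (n - m - 1) - 1 → m' ≤ n - 1 →
      b' ≤ p ^ (n - m' - 1) - 1 → fam₂ p n m b = fam₂ p n m' b' → m = m' ∧ b = b') ∧
    (∀ m a m' b, m ≤ n - 1 → a ≤ p ^ (n - m) - 1 → m' ≤ n - 1 → b ≤ p ^ (n - m' - 1) - 1 →
      fam₁ p n m a ≠ fam₂ p n m' b) ∧
    (∀ m a, m ≤ n - 1 → a ≤ p ^ (n - m) - 1 → fam₁ p n m a ≠ ⊥) ∧
    (∀ m b, m ≤ n - 1 → b ≤ p ^ (n - m - 1) - 1 → fam₂ p n m b ≠ ⊥) := by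
  refine ⟨?_, ?_, ?_, ?_, ?_, ?_⟩
  · intro H
    constructor
    · rintro ⟨x, rfl⟩
      by_cases hx : x = 0
      · left; rw [hx]; exact AddSubgroup.zmultiples_eq_bot.mpr rfl
      · right; exact classify hp hn x hx
    · rintro (h | ⟨m, a, _, _, h⟩ | ⟨m, b, _, _, h⟩)
      · exact ⟨0, by rw [h, eq_comm, AddSubgroup.zmultiples_eq_bot]⟩
      · exact ⟨_, h.trans (by unfold fam₁; rfl)⟩
      · exact ⟨_, h.trans (by unfold fam₂; rfl)⟩
  · intro m a m' a' hm ha hm' ha' h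
    exact fam₁_inj hp hn hm ha hm' ha' h
  · intro m b m' b' hm hb hm' hb' h
    exact fam₂_inj hp hn hm hb hm' hb' h
  · intro m a m' b hm ha hm' hb
    exact fam₁_ne_fam₂ hp hn hm ha hm' hb
  · intro m a hm ha
    exact fam₁_ne_bot hp hn hm ha
  · intro m b hm hb
    exact fam₂_ne_bot hp hn hm hb
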